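/- Every invertible quasi-permutation matrix over ℂ is diagonalizable. -/

import Mathlib

open Matrix

set_option maxHeartbeats 1000000

/-- A quasi-permutation matrix: `M = D * P` with `D` invertible diagonal and `P`
a permutation matrix, i.e. `M j l = d j • δ_{s j, l}` with all `d j ≠ 0`. -/
def IsQuasiPermMatrix {N : ℕ} (M : Matrix (Fin N) (Fin N) ℂ) : Prop :=
  ∃ (d : Fin N → ℂ) (s : Equiv.Perm (Fin N)), (∀ j, d j ≠ 0) ∧
    ∀ j l, M j l = if s j = l then d j else 0

open Polynomial Module in
/-- A matrix over `ℂ` annihilated by a squarefree polynomial is diagonalizable. -/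
theorem diag_of_squarefree {N : ℕ} (M : Matrix (Fin N) (Fin N) ℂ)
    {p : ℂ[X]} (hp : Squarefree p) (h0 : Polynomial.aeval M p = 0) :
    ∃ (S : Matrix (Fin N) (Fin N) ℂ) (t : Fin N → ℂ),
      IsUnit S ∧ S * M * S⁻¹ = Matrix.diagonal t := by
  classical
  set f : Module.End ℂ (Fin N → ℂ) := Matrix.toLin' M with hfdef
  have hfp : Polynomial.aeval f p = 0 := by
    have : f = (Matrix.toLinAlgEquiv' : Matrix (Fin N) (Fin N) ℂ ≃ₐ[ℂ] _).toAlgHom M := rfl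
    rw [this, Polynomial.aeval_algHom_apply, h0, map_zero]
  have hss : f.IsSemisimple := Module.End.isSemisimple_of_squarefree_aeval_eq_zero hp hfp
  have htop : ⨆ μ : ℂ, f.eigenspace μ = ⊤ := by
    have h1 := Module.End.iSup_maxGenEigenspace_eq_top f
    simp only [hss.isFinitelySemisimple.maxGenEigenspace_eq_eigenspace] at h1
    exact h1
  have hInt : DirectSum.IsInternal (fun μ : ℂ => f.eigenspace μ) :=
    (DirectSum.isInternal_submodule_iff_iSupIndep_and_iSup_eq_top _).2
      ⟨f.eigenspaces_iSupIndep, htop⟩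
  let b0 := hInt.collectedBasis (fun μ => Module.Free.chooseBasis ℂ (f.eigenspace μ))
  let eq := b0.indexEquiv (Pi.basisFun ℂ (Fin N))
  let b := b0.reindex eq
  let t : Fin N → ℂ := fun i => (eq.symm i).1
  have hb : ∀ i, M *ᵥ b i = t i • b i := by
    intro i
    have hmem : (b i : Fin N → ℂ) ∈ f.eigenspace (t i) := by
      rw [Basis.reindex_apply]
      exact hInt.collectedBasis_mem _ (eq.symm i)
    have h := Module.End.mem_eigenspace_iff.mp hmem
    rwa [hfdef, Matrix.toLin'_apply] at h
  set C : Matrix (Fin N) (Fin N) ℂ := (Pi.basisFun ℂ (Fin N)).toMatrix b with hCdef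
  have hCcol : ∀ i j, C i j = b j i := by
    intro i j
    rw [hCdef, Basis.toMatrix_apply, Pi.basisFun_repr]
  have hMC : M * C = C * Matrix.diagonal t := by
    ext i j
    have h1 : (M * C) i j = (M *ᵥ b j) i := by
      simp only [Matrix.mul_apply, Matrix.mulVec, dotProduct]
      exact Finset.sum_congr rfl fun k _ => by rw [hCcol]
    rw [h1, hb j, Matrix.mul_diagonal, hCcol, Pi.smul_apply, smul_eq_mul, mul_comm]
  have hCone : C * b.toMatrix (Pi.basisFun ℂ (Fin N)) = 1 := by
    rw [hCdef, Basis.toMatrix_mul_toMatrix_flip]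
  have hCdet : IsUnit C.det := by
    refine IsUnit.of_mul_eq_one (b.toMatrix (Pi.basisFun ℂ (Fin N))).det ?_
    rw [← Matrix.det_mul, hCone, Matrix.det_one]
  refine ⟨C⁻¹, t, ?_, ?_⟩
  · exact Matrix.isUnit_nonsing_inv_iff.2 ((Matrix.isUnit_iff_isUnit_det _).2 hCdet)
  · rw [Matrix.nonsing_inv_nonsing_inv C hCdet, mul_assoc, hMC, ← mul_assoc,
      Matrix.nonsing_inv_mul C hCdet, one_mul]

open Polynomial in
/-- Every (invertible) quasi-permutation matrix over `ℂ` is diagonalizable: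
it is similar to a diagonal matrix. -/
theorem stmt2 {N : ℕ} (M : Matrix (Fin N) (Fin N) ℂ) (hM : IsQuasiPermMatrix M) :
    ∃ (S : Matrix (Fin N) (Fin N) ℂ) (t : Fin N → ℂ),
      IsUnit S ∧ S * M * S⁻¹ = Matrix.diagonal t := by
  classical
  obtain ⟨d, s, hd, hMdef⟩ := hM
  set m : ℕ := orderOf s with hmdef
  have hm0 : m ≠ 0 := (orderOf_pos s).ne'
  set e : Fin N → ℂ := fun j => ∏ i ∈ Finset.range m, d ((s ^ i) j) with hedef
  have he : ∀ j, e j ≠ 0 := fun j =>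
    Finset.prod_ne_zero_iff.2 fun i _ => hd _
  -- powers of M
  have hpow : ∀ k j l, (M ^ k) j l =
      if (s ^ k) j = l then (∏ i ∈ Finset.range k, d ((s ^ i) j)) else 0 := by
    intro k
    induction k with
    | zero => intro j l; simp [Matrix.one_apply]
    | succ k ih =>
      intro j l
      rw [pow_succ', Matrix.mul_apply]
      have hsum : ∀ x, M j x * (M ^ k) x l =
          if s j = x then d j * (M ^ k) x l else 0 := by
        intro x
        rw [hMdef]
        split <;> simp
      rw [Finset.sum_congr rfl fun x _ => hsum x, Finset.sum_ite_eq Finset.univ (s j),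
        if_pos (Finset.mem_univ _), ih]
      have harg : (s ^ k) (s j) = (s ^ (k + 1)) j := by
        simp [pow_succ]
      have hprod : d j * (∏ i ∈ Finset.range k, d ((s ^ i) (s j)))
          = ∏ i ∈ Finset.range (k + 1), d ((s ^ i) j) := by
        calc d j * (∏ i ∈ Finset.range k, d ((s ^ i) (s j)))
            = (∏ i ∈ Finset.range k, d ((s ^ (i + 1)) j)) * d ((s ^ 0) j) := by
              rw [mul_comm]
              refine congrArg₂ _ (Finset.prod_congr rfl fun i _ => ?_) (by simp)
              rw [pow_succ, Equiv.Perm.mul_apply]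
          _ = ∏ i ∈ Finset.range (k + 1), d ((s ^ i) j) :=
              (Finset.prod_range_succ' (fun i => d ((s ^ i) j)) k).symm
      rw [harg]
      split
      · exact hprod
      · exact mul_zero _
  have hMm : M ^ m = Matrix.diagonal e := by
    ext j l
    rw [hpow m j l, Matrix.diagonal_apply]
    have : (s ^ m) j = j := by rw [pow_orderOf_eq_one s]; rfl
    rw [this]
  -- the annihilating polynomial
  set T : Finset ℂ := Finset.univ.image e with hTdef
  set Q : ℂ[X] := ∏ c ∈ T, (X - C c) with hQdef
  set p : ℂ[X] := Q.comp (X ^ m) with hpdef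
  have hpeq : p = ∏ c ∈ T, (X ^ m - C c) := by
    rw [hpdef, hQdef, Polynomial.prod_comp]
    exact Finset.prod_congr rfl fun c _ => by
      rw [Polynomial.sub_comp, Polynomial.X_comp, Polynomial.C_comp]
  have hsep : p.Separable := by
    rw [hpeq]
    refine Polynomial.separable_prod' ?_ ?_
    · intro x hx y hy hxy
      refine ⟨Polynomial.C (y - x)⁻¹, -Polynomial.C (y - x)⁻¹, ?_⟩
      have hsub : (X ^ m - Polynomial.C x) - (X ^ m - Polynomial.C y)
          = Polynomial.C (y - x) := by
        rw [sub_sub_sub_cancel_left, Polynomial.C_sub]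
      rw [neg_mul, ← sub_eq_add_neg, ← mul_sub, hsub, ← Polynomial.C_mul,
        inv_mul_cancel₀ (sub_ne_zero_of_ne (Ne.symm hxy)), Polynomial.C_1]
    · intro c hc
      obtain ⟨j, _, rfl⟩ := Finset.mem_image.1 hc
      exact Polynomial.separable_X_pow_sub_C _ (Nat.cast_ne_zero.2 hm0) (he j)
  have hQe : Polynomial.aeval e Q = 0 := by
    funext j
    have h1 : (Polynomial.aeval e Q) j
        = Polynomial.aeval (e j) Q :=
      (Polynomial.aeval_algHom_apply (Pi.evalAlgHom ℂ (fun _ : Fin N => ℂ) j) e Q).symm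
    rw [Pi.zero_apply, h1, hQdef, map_prod]
    refine Finset.prod_eq_zero (Finset.mem_image_of_mem e (Finset.mem_univ j)) ?_
    rw [map_sub, Polynomial.aeval_X, Polynomial.aeval_C]
    simp
  have hann : Polynomial.aeval M p = 0 := by
    rw [hpdef, Polynomial.aeval_comp, map_pow, Polynomial.aeval_X, hMm,
      ← Matrix.diagonalAlgHom_apply (R := ℂ),
      Polynomial.aeval_algHom_apply, hQe, map_zero]
  exact diag_of_squarefree M hsep.squarefree hann
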